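/- The set P = ⋃_{x ∈ [-1,1]} {z ∈ ℂ³ : z₀² - z₁² - z₂² - 2z₁z₂x = 0} has path-connected complement in ℂ³. -/

import Mathlib

open Set Complex

set_option maxHeartbeats 1000000

noncomputable section

private def SS : Set (ℂ × ℂ × ℂ) :=
  {z | ∀ t ∈ Icc (0:ℝ) 1,
    z.1 ^ 2 ≠ (1 - (t:ℂ)) * (z.2.1 - z.2.2) ^ 2 + (t:ℂ) * (z.2.1 + z.2.2) ^ 2}

private lemma repr_exists (f : ℂ →L[ℝ] ℝ) :
    ∃ μ : ℂ, ∀ x : ℂ, f x = ((starRingEnd ℂ) μ * x).re := by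
  refine ⟨⟨f 1, f I⟩, fun x => ?_⟩
  have hx : x = x.re • (1:ℂ) + x.im • I := by
    apply Complex.ext <;> simp
  have h1 : f x = x.re * f 1 + x.im * f I := by
    conv_lhs => rw [hx]
    rw [map_add, map_smul, map_smul]
    simp [smul_eq_mul]
  rw [h1]
  simp [Complex.mul_re]
  ring

private lemma joinedIn_aux {X : Type*} [TopologicalSpace X] {S : Set X} (γ : ℝ → X)
    (hγ : Continuous γ) (hS : ∀ t ∈ Icc (0:ℝ) 1, γ t ∈ S) :
    JoinedIn S (γ 0) (γ 1) :=
  ⟨⟨⟨fun t => γ t, hγ.comp continuous_subtype_val⟩, by simp, by simp⟩,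
    fun t => hS t t.2⟩

private lemma key (a b c : ℂ) (h : (a, b, c) ∈ SS) : JoinedIn SS (a, b, c) (1, 0, 0) := by
  set u := (b - c) ^ 2 with hu
  set v := (b + c) ^ 2 with hv
  have hmem : ∀ t ∈ Icc (0:ℝ) 1, (1 - (t:ℂ)) * u + (t:ℂ) * v ∈ segment ℝ u v := by
    intro t ht
    exact ⟨1 - t, t, by linarith [ht.2], ht.1, by ring, by
      push_cast [Complex.real_smul]; ring⟩
  have hnot : a ^ 2 ∉ segment ℝ u v := by
    rintro ⟨s, t, hs, ht, hst, heq⟩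
    refine h t ⟨ht, by linarith⟩ ?_
    rw [← heq]
    have hs' : s = 1 - t := by linarith
    subst hs'
    push_cast [Complex.real_smul]
    rw [hu, hv]
  obtain ⟨f, c₀, hfs, hfa⟩ :=
    geometric_hahn_banach_closed_point (convex_segment u v)
      (by rw [segment_eq_image]
          exact ((isCompact_Icc).image (by fun_prop)).isClosed) hnot
  obtain ⟨μ, hμ⟩ := repr_exists f
  have hf_smul : ∀ (r : ℝ) (w : ℂ), f ((r:ℂ) * w) = r * f w := by
    intro r w
    rw [← Complex.real_smul, map_smul, smul_eq_mul]
  have hμ0 : μ ≠ 0 := by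
    intro h0
    have h1 := hfs u (left_mem_segment ℝ u v)
    have h2 := hfa
    rw [hμ u, h0] at h1
    rw [hμ (a ^ 2), h0] at h2
    simp at h1 h2
    linarith
  set m := ‖μ‖ with hmdef
  have hm : 0 < m := norm_pos_iff.mpr hμ0
  set θ := Complex.arg μ with hθdef
  set E : ℝ → ℂ := fun s => Complex.exp ((s:ℂ) * I) with hE
  have hE0 : ∀ s, E s ≠ 0 := fun s => Complex.exp_ne_zero _
  have hEsq : ∀ s : ℝ, E (s / 2) ^ 2 = E s := by
    intro s
    rw [hE]
    simp only []
    rw [sq, ← Complex.exp_add]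
    norm_num
    ring_nf
  have hEadd : ∀ s t : ℝ, E s * E t = E (s + t) := by
    intro s t
    rw [hE]
    simp only []
    rw [← Complex.exp_add]
    push_cast
    ring_nf
  have hμE : (m:ℂ) * E θ = μ := Complex.norm_mul_exp_arg_mul_I μ
  have hconjE : (starRingEnd ℂ) μ * E θ = (m:ℂ) := by
    have h1 : (starRingEnd ℂ) μ * ((m:ℂ) * E θ) = (m:ℂ) * ((starRingEnd ℂ) μ * E θ) := by ring
    rw [hμE] at h1
    have h2 : (starRingEnd ℂ) μ * μ = ((m^2 : ℝ) : ℂ) := by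
      rw [mul_comm, Complex.mul_conj]
      norm_cast
      rw [← Complex.sq_norm]
    rw [h2] at h1
    have hm0 : ((m:ℝ):ℂ) ≠ 0 := by exact_mod_cast hm.ne'
    refine mul_left_cancel₀ hm0 ?_
    rw [← h1]
    push_cast
    ring
  set M := max c₀ 0 with hM
  set ρ := max (max (‖a‖) 1) ((M + 1) / m) with hρdef
  have hρ1 : (1:ℝ) ≤ ρ := le_trans (le_max_right _ _) (le_max_left _ _)
  have hρa : ‖a‖ ≤ ρ := le_trans (le_max_left _ _) (le_max_left _ _)
  have hρ0 : (0:ℝ) < ρ := lt_of_lt_of_le one_pos hρ1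
  have hρM : M < ρ ^ 2 * m := by
    have h1 : (M + 1) / m ≤ ρ := le_max_right _ _
    have h2 : M + 1 ≤ ρ * m := by
      rw [div_le_iff₀ hm] at h1; linarith
    nlinarith [mul_pos hρ0 hm, hρ1, h2]
  have hfρ2 : f ((ρ:ℂ) ^ 2 * E θ) = ρ ^ 2 * m := by
    have h2 : (starRingEnd ℂ) μ * ((ρ:ℂ) ^ 2 * E θ) = ((ρ ^ 2 * m : ℝ) : ℂ) := by
      rw [show (starRingEnd ℂ) μ * ((ρ:ℂ) ^ 2 * E θ)
          = (ρ:ℂ) ^ 2 * ((starRingEnd ℂ) μ * E θ) from by ring, hconjE]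
      push_cast; ring
    rw [hμ, h2, Complex.ofReal_re]
  have hS1 : ∀ A : ℂ, c₀ < f (A ^ 2) → (A, b, c) ∈ SS := by
    intro A hA t ht heq
    have hw := hfs _ (hmem t ht)
    rw [← hu, ← hv] at heq
    rw [heq] at hA
    linarith
  have hS2 : ∀ (A : ℂ) (s : ℝ), s ∈ Icc (0:ℝ) 1 → M < f (A ^ 2) →
      (A, (1 - (s:ℂ)) * b, (1 - (s:ℂ)) * c) ∈ SS := by
    intro A s hs hA t ht heq
    have hw := hfs _ (hmem t ht)
    have hrw : (1 - (t:ℂ)) * ((1 - (s:ℂ)) * b - (1 - (s:ℂ)) * c) ^ 2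
        + (t:ℂ) * ((1 - (s:ℂ)) * b + (1 - (s:ℂ)) * c) ^ 2
        = (((1 - s) ^ 2 : ℝ) : ℂ) * ((1 - (t:ℂ)) * u + (t:ℂ) * v) := by
      rw [hu, hv]; push_cast; ring
    rw [hrw] at heq
    have hfw : f (A ^ 2) = (1 - s) ^ 2 * f ((1 - (t:ℂ)) * u + (t:ℂ) * v) := by
      rw [heq, hf_smul]
    have hb : (1 - s) ^ 2 * f ((1 - (t:ℂ)) * u + (t:ℂ) * v) ≤ M := by
      rcases le_or_gt 0 (f ((1 - (t:ℂ)) * u + (t:ℂ) * v)) with h' | h'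
      · have h1 : (1 - s) ^ 2 ≤ 1 := by nlinarith [hs.1, hs.2]
        nlinarith [le_max_left c₀ (0:ℝ)]
      · nlinarith [le_max_right c₀ (0:ℝ), sq_nonneg (1 - s)]
    rw [hfw] at hA
    linarith
  have hfgen : ∀ (r φ : ℝ) (e : ℂ), e ^ 2 = 1 →
      f ((e * (r:ℂ) * E ((θ + φ) / 2)) ^ 2) = r ^ 2 * (m * Real.cos φ) := by
    intro r φ e he
    have h1 : (e * (r:ℂ) * E ((θ + φ) / 2)) ^ 2 = ((r ^ 2 : ℝ) : ℂ) * (E θ * E φ) := by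
      rw [mul_pow, mul_pow, he, hEsq, one_mul, hEadd]
      push_cast; ring
    have h2 : (starRingEnd ℂ) μ * (((r ^ 2 : ℝ) : ℂ) * (E θ * E φ))
        = ((r ^ 2 * m : ℝ) : ℂ) * E φ := by
      rw [show (starRingEnd ℂ) μ * (((r ^ 2 : ℝ) : ℂ) * (E θ * E φ))
          = ((r ^ 2 : ℝ) : ℂ) * (((starRingEnd ℂ) μ * E θ) * E φ) from by ring, hconjE]
      push_cast; ring
    rw [h1, hμ, h2, Complex.re_ofReal_mul, Complex.exp_ofReal_mul_I_re]
    ring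
  have hstage1 : ∃ α : ℂ, α ^ 2 = (ρ:ℂ) ^ 2 * E θ ∧ α ≠ 0 ∧
      JoinedIn SS (a, b, c) (α, b, c) := by
    rcases le_or_gt (f (a ^ 2)) 0 with hd | hd
    · have hc0 : c₀ < 0 := lt_of_lt_of_le hfa hd
      refine ⟨(ρ:ℂ) * E (θ / 2), by rw [mul_pow, hEsq],
        mul_ne_zero (by exact_mod_cast hρ0.ne') (hE0 _), ?_⟩
      have j1 : JoinedIn SS (a, b, c) (0, b, c) := by
        have hms : ∀ s ∈ Icc (0:ℝ) 1, (((1 - (s:ℂ)) * a, b, c) : ℂ × ℂ × ℂ) ∈ SS := by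
          intro s hs
          refine hS1 _ ?_
          have h1 : ((1 - (s:ℂ)) * a) ^ 2 = (((1 - s) ^ 2 : ℝ) : ℂ) * a ^ 2 := by
            push_cast; ring
          rw [h1, hf_smul]
          have h2 : (1 - s) ^ 2 ≤ 1 := by nlinarith [hs.1, hs.2]
          nlinarith [sq_nonneg (1 - s)]
        simpa using joinedIn_aux (fun s : ℝ => ((1 - (s:ℂ)) * a, b, c)) (by fun_prop) hms
      have j2 : JoinedIn SS (0, b, c) ((ρ:ℂ) * E (θ / 2), b, c) := by
        have hms : ∀ s ∈ Icc (0:ℝ) 1,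
            (((s:ℂ) * ((ρ:ℂ) * E (θ / 2)), b, c) : ℂ × ℂ × ℂ) ∈ SS := by
          intro s hs
          refine hS1 _ ?_
          have h1 : ((s:ℂ) * ((ρ:ℂ) * E (θ / 2))) ^ 2
              = ((s ^ 2 : ℝ) : ℂ) * ((ρ:ℂ) ^ 2 * E θ) := by
            rw [mul_pow, mul_pow, hEsq]
            push_cast; ring
          rw [h1, hf_smul, hfρ2]
          have h2 : 0 ≤ s ^ 2 * (ρ ^ 2 * m) := by positivity
          linarith
        simpa using joinedIn_aux
          (fun s : ℝ => ((s:ℂ) * ((ρ:ℂ) * E (θ / 2)), b, c)) (by fun_prop) hms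
      exact j1.trans j2
    · have ha0 : a ≠ 0 := by
        intro h0
        rw [h0] at hd
        simp at hd
      have haa : 0 < ‖a‖ := norm_pos_iff.mpr ha0
      set δ := ((starRingEnd ℂ) μ * a ^ 2).arg with hδdef
      have hwre : ((starRingEnd ℂ) μ * a ^ 2).re = f (a ^ 2) := (hμ _).symm
      have hδ : |δ| < Real.pi / 2 :=
        Complex.abs_arg_lt_pi_div_two_iff.mpr (Or.inl (by rw [hwre]; exact hd))
      have hm2 : ((m ^ 2 : ℝ) : ℂ) ≠ 0 := by
        exact_mod_cast (pow_ne_zero 2 hm.ne')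
      have ha2 : a ^ 2 = ((‖a‖ ^ 2 : ℝ) : ℂ) * E (θ + δ) := by
        have h1 := Complex.norm_mul_exp_arg_mul_I ((starRingEnd ℂ) μ * a ^ 2)
        rw [norm_mul, Complex.norm_conj, norm_pow, ← hδdef] at h1
        refine mul_left_cancel₀ (show ((m:ℝ):ℂ) ≠ 0 from by exact_mod_cast hm.ne') ?_
        calc (m:ℂ) * a ^ 2
            = ((starRingEnd ℂ) μ * E θ) * a ^ 2 := by rw [hconjE]
          _ = ((starRingEnd ℂ) μ * a ^ 2) * E θ := by ring
          _ = ((‖μ‖ * ‖a‖ ^ 2 : ℝ) : ℂ) * Complex.exp ((δ:ℂ) * I) * E θ := by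
              rw [h1]
          _ = (m:ℂ) * (((‖a‖ ^ 2 : ℝ) : ℂ) * E (θ + δ)) := by
              rw [← hEadd θ δ]
              push_cast
              rw [← hmdef]
              ring
      set ε := a / (((‖a‖ : ℝ) : ℂ) * E ((θ + δ) / 2)) with hεdef
      have hden : ((‖a‖ : ℝ) : ℂ) * E ((θ + δ) / 2) ≠ 0 :=
        mul_ne_zero (by exact_mod_cast haa.ne') (hE0 _)
      have hε0 : ε ≠ 0 := div_ne_zero ha0 hden
      have hεa : ε * (((‖a‖ : ℝ) : ℂ) * E ((θ + δ) / 2)) = a :=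
        div_mul_cancel₀ a hden
      have hε2 : ε ^ 2 = 1 := by
        rw [hεdef, div_pow, mul_pow, hEsq, div_eq_one_iff_eq
          (by exact mul_ne_zero (pow_ne_zero 2 (by exact_mod_cast haa.ne')) (hE0 _))]
        rw [ha2]; push_cast; ring
      have hcosd : f (a ^ 2) = ‖a‖ ^ 2 * (m * Real.cos δ) := by
        have hx := hfgen (‖a‖) δ ε hε2
        rw [show ε * ((‖a‖ : ℝ) : ℂ) * E ((θ + δ) / 2) = a from by
          rw [mul_assoc]; exact hεa] at hx
        exact hx
      have hcospos : 0 < Real.cos δ := by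
        by_contra hc
        push_neg at hc
        have h4 : m * Real.cos δ ≤ 0 := mul_nonpos_of_nonneg_of_nonpos hm.le hc
        nlinarith [sq_nonneg (‖a‖), h4, hcosd, hd]
      refine ⟨ε * (ρ:ℂ) * E (θ / 2), ?_, ?_, ?_⟩
      · rw [mul_pow, mul_pow, hε2, hEsq, one_mul]
      · exact mul_ne_zero (mul_ne_zero hε0 (by exact_mod_cast hρ0.ne')) (hE0 _)
      · have hms : ∀ t ∈ Icc (0:ℝ) 1,
            ((ε * ((‖a‖ + t * (ρ - ‖a‖) : ℝ) : ℂ)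
              * E ((θ + (1 - t) * δ) / 2), b, c) : ℂ × ℂ × ℂ) ∈ SS := by
          intro t ht
          refine hS1 _ ?_
          rw [hfgen _ _ _ hε2]
          have hr : ‖a‖ ≤ ‖a‖ + t * (ρ - ‖a‖) := by
            nlinarith [ht.1, ht.2]
          have hcos2 : Real.cos δ ≤ Real.cos ((1 - t) * δ) := by
            rw [← Real.cos_abs δ, ← Real.cos_abs ((1 - t) * δ)]
            apply Real.cos_le_cos_of_nonneg_of_le_pi (abs_nonneg _)
            · linarith [hδ, Real.pi_pos]
            · rw [abs_mul]
              rw [_root_.abs_of_nonneg (show (0:ℝ) ≤ 1 - t by linarith [ht.2])]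
              nlinarith [_root_.abs_nonneg δ, ht.1, ht.2]
          have h3 : ‖a‖ ^ 2 * (m * Real.cos δ)
              ≤ (‖a‖ + t * (ρ - ‖a‖)) ^ 2
                * (m * Real.cos ((1 - t) * δ)) := by
            have hc1 : 0 < Real.cos ((1 - t) * δ) := lt_of_lt_of_le hcospos hcos2
            have hsq : ‖a‖ ^ 2 ≤ (‖a‖ + t * (ρ - ‖a‖)) ^ 2 :=
              pow_le_pow_left₀ haa.le hr 2
            calc ‖a‖ ^ 2 * (m * Real.cos δ)
                ≤ (‖a‖ + t * (ρ - ‖a‖)) ^ 2 * (m * Real.cos δ) :=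
                  mul_le_mul_of_nonneg_right hsq (by positivity)
              _ ≤ (‖a‖ + t * (ρ - ‖a‖)) ^ 2
                  * (m * Real.cos ((1 - t) * δ)) :=
                  mul_le_mul_of_nonneg_left
                    (mul_le_mul_of_nonneg_left hcos2 hm.le) (sq_nonneg _)
          nlinarith [hcosd, hfa]
        have hJ := joinedIn_aux (fun t : ℝ =>
          (ε * ((‖a‖ + t * (ρ - ‖a‖) : ℝ) : ℂ)
            * E ((θ + (1 - t) * δ) / 2), b, c)) (by fun_prop) hms
        simpa [show ε * ((‖a‖ : ℝ) : ℂ) * E ((θ + δ) / 2) = a from by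
          rw [mul_assoc]; exact hεa] using hJ

  obtain ⟨α, hα2, hα0, hJ1⟩ := hstage1
  have hfαρ : f (α ^ 2) = ρ ^ 2 * m := by rw [hα2]; exact hfρ2
  have hJ2 : JoinedIn SS (α, b, c) (α, 0, 0) := by
    have hms : ∀ s ∈ Icc (0:ℝ) 1,
        ((α, (1 - (s:ℂ)) * b, (1 - (s:ℂ)) * c) : ℂ × ℂ × ℂ) ∈ SS := by
      intro s hs
      exact hS2 α s hs (by rw [hfαρ]; exact hρM)
    simpa using joinedIn_aux
      (fun s : ℝ => (α, (1 - (s:ℂ)) * b, (1 - (s:ℂ)) * c)) (by fun_prop) hms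
  have hJ3 : JoinedIn SS (α, 0, 0) ((1:ℂ), (0:ℂ), (0:ℂ)) := by
    have hms : ∀ t ∈ Icc (0:ℝ) 1,
        ((Complex.exp ((1 - (t:ℂ)) * Complex.log α), (0:ℂ), (0:ℂ)) : ℂ × ℂ × ℂ) ∈ SS := by
      intro t ht t' ht'
      have h0 : (1 - (t':ℂ)) * ((0:ℂ) - 0) ^ 2 + (t':ℂ) * ((0:ℂ) + 0) ^ 2 = 0 := by ring
      rw [h0]
      exact pow_ne_zero _ (Complex.exp_ne_zero _)
    have hJ := joinedIn_aux
      (fun t : ℝ => (Complex.exp ((1 - (t:ℂ)) * Complex.log α), (0:ℂ), (0:ℂ)))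
      (by fun_prop) hms
    simpa [Complex.exp_log hα0] using hJ
  exact (hJ1.trans hJ2).trans hJ3

private lemma base_mem : ((1:ℂ), (0:ℂ), (0:ℂ)) ∈ SS := by
  intro t ht heq
  simp at heq

end

/-- The complement in `ℂ³` of
`P = ⋃_{x ∈ [-1,1]} {z : z₀² - z₁² - z₂² - 2z₁z₂x = 0}` is path connected. -/
theorem resolvent_set_pathConnected
    (P : Set (ℂ × ℂ × ℂ))
    (hP : P = {z : ℂ × ℂ × ℂ | ∃ x : ℝ, x ∈ Set.Icc (-1 : ℝ) 1 ∧
      z.1 ^ 2 - z.2.1 ^ 2 - z.2.2 ^ 2 - 2 * z.2.1 * z.2.2 * (x : ℂ) = 0}) :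
    IsPathConnected Pᶜ := by
  have hPc : Pᶜ = SS := by
    rw [hP]
    ext z
    simp only [Set.mem_compl_iff, Set.mem_setOf_eq, SS, not_exists]
    constructor
    · intro hz t ht heq
      refine hz (2*t-1) ⟨⟨by linarith [ht.1], by linarith [ht.2]⟩, ?_⟩
      push_cast
      linear_combination heq
    · rintro hz x ⟨hx, heq⟩
      refine hz ((x+1)/2) ⟨by linarith [hx.1], by linarith [hx.2]⟩ ?_
      push_cast
      linear_combination heq
  rw [hPc]
  refine ⟨((1:ℂ), (0:ℂ), (0:ℂ)), base_mem, ?_⟩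
  intro z hz
  exact (key z.1 z.2.1 z.2.2 hz).symm
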